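/- Let P be a poset with the upper convexity (convex sets are the upper sets), equipped with a topology in which every principal ideal ↓x is closed. Then every nonempty compact subset K satisfies ↑K = ↑(Min K), where Min K is the set of minimal elements of K; in particular the convex hull of K equals the convex hull of its extreme points. -/

import Mathlib

/-- Every chain in a compact set (lower semiclosed topology) has a lower bound in the set. -/
lemma chain_has_lb_of_compact {P : Type*} [PartialOrder P] [TopologicalSpace P]
    (hls : ∀ x : P, IsClosed (Set.Iic x))
    (K : Set P) (hK : IsCompact K) (S : Set P) (hSK : S ⊆ K)
    (hchain : ∀ x ∈ S, ∀ y ∈ S, x ≠ y → x ≤ y ∨ y ≤ x) (hSne : S.Nonempty) :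
    ∃ lb ∈ K, ∀ z ∈ S, lb ≤ z := by
  have h := hK.inter_iInter_nonempty (fun i : S => Set.Iic (i : P))
    (fun i => hls _) ?_
  · obtain ⟨lb, hlbK, hlb⟩ := h
    refine ⟨lb, hlbK, fun z hz => ?_⟩
    simpa using Set.mem_iInter.1 hlb ⟨z, hz⟩
  · intro t
    rcases t.eq_empty_or_nonempty with rfl | htne
    · obtain ⟨y, hy⟩ := hSne
      exact ⟨y, hSK hy, by simp⟩
    · obtain ⟨i, hit, hi⟩ := t.exists_minimal htne
      refine ⟨(i : P), hSK i.2, ?_⟩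
      simp only [Set.mem_iInter, Set.mem_Iic]
      intro j hjt
      rcases eq_or_ne (i : P) (j : P) with h | h
      · exact le_of_eq h
      · rcases hchain _ i.2 _ j.2 h with h' | h'
        · exact h'
        · exact absurd (lt_of_le_of_ne h' (Ne.symm h)) (by
            intro hlt
            exact absurd (hi hjt hlt.le) (not_le_of_gt hlt))

/-- Every element of a compact set (in a lower semiclosed topology) lies above a
minimal element of that set. -/
lemma exists_minimal_le_of_compact {P : Type*} [PartialOrder P] [TopologicalSpace P]
    (hls : ∀ x : P, IsClosed (Set.Iic x))
    (K : Set P) (hK : IsCompact K) {a : P} (ha : a ∈ K) :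
    ∃ m, m ∈ K ∧ m ≤ a ∧ ∀ b ∈ K, b ≤ m → b = m := by
  obtain ⟨m, hma, hm⟩ := zorn_le_nonempty₀ (α := Pᵒᵈ)
    {y : Pᵒᵈ | OrderDual.ofDual y ∈ K ∧ OrderDual.ofDual y ≤ a}
    (fun c hcs hc y hy => by
      obtain ⟨lb, hlbK, hlb⟩ := chain_has_lb_of_compact hls K hK
        (OrderDual.ofDual '' c) (by rintro _ ⟨z, hz, rfl⟩; exact (hcs hz).1)
        (by
          rintro _ ⟨z, hz, rfl⟩ _ ⟨w, hw, rfl⟩ hne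
          rcases hc hz hw (fun e => hne (congrArg OrderDual.ofDual e)) with h | h
          · exact Or.inr h
          · exact Or.inl h)
        ⟨OrderDual.ofDual y, y, hy, rfl⟩
      refine ⟨OrderDual.toDual lb, ⟨hlbK, (hlb _ ⟨y, hy, rfl⟩).trans (hcs hy).2⟩,
        fun z hz => hlb _ ⟨z, hz, rfl⟩⟩)
    (OrderDual.toDual a) ⟨ha, le_rfl⟩
  exact ⟨OrderDual.ofDual m, hm.1.1, hm.1.2, fun b hb hbm =>
    le_antisymm hbm (hm.2 ⟨hb, hbm.trans hm.1.2⟩ hbm)⟩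

/-- Krein–Milman for posets with the upper convexity: in a poset with a lower
semiclosed topology, the upper closure (convex hull) of a nonempty compact set
equals the upper closure (convex hull) of its set of minimal (extreme) points. -/
theorem krein_milman_posets_upper {P : Type*} [PartialOrder P] [TopologicalSpace P]
    (hls : ∀ x : P, IsClosed (Set.Iic x))
    (K : Set P) (hne : K.Nonempty) (hK : IsCompact K) :
    {x | ∃ a ∈ K, a ≤ x} =
      {x | ∃ a ∈ {m | m ∈ K ∧ ∀ b ∈ K, b ≤ m → b = m}, a ≤ x} := by
  ext x
  constructor
  · rintro ⟨a, haK, hax⟩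
    obtain ⟨m, hmK, hma, hmin⟩ := exists_minimal_le_of_compact hls K hK haK
    exact ⟨m, ⟨hmK, hmin⟩, hma.trans hax⟩
  · rintro ⟨a, ⟨haK, _⟩, hax⟩
    exact ⟨a, haK, hax⟩
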